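/- Deviation bound for the non-ideal work estimate (Sec. III of the paper): if the measurement-disturbance probabilities satisfy q n n = C for every n, then |W_nonid − W_Λ| ≤ (1 − C) * ((⨆ m, Ef m) − (⨅ m, Ef m)), i.e. the deviation of the non-ideal work estimate from its ideal value is at most (1 − C) times the spectral spread of the final Hamiltonian. -/
import Mathlib


open Finset

/-- Deviation bound for the non-ideal work estimate (Sec. III):
if `q n n = C` for every `n`, then
`|W_nonid − W_Λ| ≤ (1 − C) * ((⨆ m, Ef m) − (⨅ m, Ef m))`. -/
theorem nonideal_work_deviation_bound
    (d : ℕ) (hd : 1 ≤ d) (E0 Ef : Fin d → ℝ) (β : ℝ) (hβ : 0 < β)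
    (p : Fin d → ℝ)
    (hp : ∀ n, p n = Real.exp (-β * E0 n) / ∑ k, Real.exp (-β * E0 k))
    (P : Fin d → Fin d → ℝ)
    (hP0 : ∀ l m, 0 ≤ P l m) (hP1 : ∀ l, ∑ m, P l m = 1)
    (q : Fin d → Fin d → ℝ)
    (hq0 : ∀ l n, 0 ≤ q l n) (hq1 : ∀ n, ∑ l, q l n = 1)
    (C : ℝ) (hC0 : 0 ≤ C) (hC1 : C ≤ 1) (hqC : ∀ n, q n n = C) :
    |(∑ n, ∑ m, ∑ l, p n * q l n * P l m * (Ef m - E0 n)) -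
        (∑ n, ∑ m, p n * P n m * (Ef m - E0 n))| ≤
      (1 - C) * ((⨆ m, Ef m) - (⨅ m, Ef m)) := by
  haveI : NeZero d := ⟨Nat.one_le_iff_ne_zero.mp hd⟩
  set M : ℝ := ⨆ m, Ef m with hMdef
  set Mi : ℝ := ⨅ m, Ef m with hMidef
  have hM : ∀ m, Ef m ≤ M := fun m => le_ciSup (Set.Finite.bddAbove (Set.finite_range Ef)) m
  have hMi : ∀ m, Mi ≤ Ef m := fun m => ciInf_le (Set.Finite.bddBelow (Set.finite_range Ef)) m
  set F : Fin d → ℝ := fun l => ∑ m, P l m * Ef m with hFdef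
  have hFle : ∀ l, F l ≤ M := by
    intro l
    calc ∑ m, P l m * Ef m ≤ ∑ m, P l m * M :=
          Finset.sum_le_sum (fun m _ => mul_le_mul_of_nonneg_left (hM m) (hP0 l m))
      _ = M := by rw [← Finset.sum_mul, hP1, one_mul]
  have hFge : ∀ l, Mi ≤ F l := by
    intro l
    calc Mi = ∑ m, P l m * Mi := by rw [← Finset.sum_mul, hP1, one_mul]
      _ ≤ ∑ m, P l m * Ef m :=
          Finset.sum_le_sum (fun m _ => mul_le_mul_of_nonneg_left (hMi m) (hP0 l m))
  have hZ : 0 < ∑ k, Real.exp (-β * E0 k) :=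
    Finset.sum_pos (fun k _ => Real.exp_pos _) Finset.univ_nonempty
  have hp0 : ∀ n, 0 ≤ p n := fun n => by
    rw [hp n]; positivity
  have hpsum : ∑ n, p n = 1 := by
    simp only [hp]
    rw [← Finset.sum_div, div_self hZ.ne']
  -- inner sum over m of P l m * (Ef m - E0 n) is F l - E0 n
  have hPm : ∀ l n, ∑ m, P l m * (Ef m - E0 n) = F l - E0 n := by
    intro l n
    simp only [mul_sub, Finset.sum_sub_distrib, ← Finset.sum_mul, hP1, one_mul, hFdef]
  -- rewrite the difference
  set D : Fin d → ℝ := fun n => ∑ l, q l n * (F l - F n) with hDdef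
  have key : (∑ n, ∑ m, ∑ l, p n * q l n * P l m * (Ef m - E0 n)) -
      (∑ n, ∑ m, p n * P n m * (Ef m - E0 n)) = ∑ n, p n * D n := by
    rw [← Finset.sum_sub_distrib]
    refine Finset.sum_congr rfl (fun n _ => ?_)
    have h1 : ∑ m, ∑ l, p n * q l n * P l m * (Ef m - E0 n)
        = ∑ l, p n * q l n * (F l - E0 n) := by
      rw [Finset.sum_comm]
      refine Finset.sum_congr rfl (fun l _ => ?_)
      rw [← hPm l n, Finset.mul_sum]
      exact Finset.sum_congr rfl (fun m _ => by ring)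
    have h2 : ∑ m, p n * P n m * (Ef m - E0 n) = p n * (F n - E0 n) := by
      rw [← hPm n n, Finset.mul_sum]
      exact Finset.sum_congr rfl (fun m _ => by ring)
    have hq := hq1 n
    have h3 : ∑ l, p n * q l n * (F l - E0 n)
        = (∑ l, p n * (q l n * (F l - F n))) + (∑ l, q l n) * (p n * (F n - E0 n)) := by
      rw [Finset.sum_mul, ← Finset.sum_add_distrib]
      exact Finset.sum_congr rfl (fun l _ => by ring)
    rw [h1, h2, h3, hq, hDdef, Finset.mul_sum]
    ring
  rw [key]
  -- bound each D n
  have hD : ∀ n, |D n| ≤ (1 - C) * (M - Mi) := by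
    intro n
    have habs : ∀ l, |F l - F n| ≤ M - Mi := by
      intro l
      rw [abs_sub_le_iff]
      constructor <;> [linarith [hFle l, hFge n]; linarith [hFle n, hFge l]]
    calc |D n| ≤ ∑ l, |q l n * (F l - F n)| := Finset.abs_sum_le_sum_abs _ _
      _ = ∑ l, q l n * |F l - F n| := by
          refine Finset.sum_congr rfl (fun l _ => ?_)
          rw [abs_mul, abs_of_nonneg (hq0 l n)]
      _ = ∑ l ∈ Finset.univ.erase n, q l n * |F l - F n| := by
          rw [Finset.sum_erase]
          simp
      _ ≤ ∑ l ∈ Finset.univ.erase n, q l n * (M - Mi) :=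
          Finset.sum_le_sum (fun l _ => mul_le_mul_of_nonneg_left (habs l) (hq0 l n))
      _ = (1 - C) * (M - Mi) := by
          rw [← Finset.sum_mul, Finset.sum_erase_eq_sub (Finset.mem_univ n), hq1, hqC]
  calc |∑ n, p n * D n| ≤ ∑ n, |p n * D n| := Finset.abs_sum_le_sum_abs _ _
    _ = ∑ n, p n * |D n| := by
        refine Finset.sum_congr rfl (fun n _ => ?_)
        rw [abs_mul, abs_of_nonneg (hp0 n)]
    _ ≤ ∑ n, p n * ((1 - C) * (M - Mi)) :=
        Finset.sum_le_sum (fun n _ => mul_le_mul_of_nonneg_left (hD n) (hp0 n))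
    _ = (1 - C) * (M - Mi) := by rw [← Finset.sum_mul, hpsum, one_mul]
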